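/- arXiv:1311.0754 — 3 statements merged into one kernel-verified Lean document; each statement's English description precedes it below -/
import Mathlib

section
/- The integral from 0 to 1 of (1 - e^{-u})/u du minus the integral from 1 to infinity of e^{-u}/u du equals the Euler–Mascheroni constant γ. -/
open Real MeasureTheory Set Filter Topology intervalIntegral

-- integrability lemmas
private lemma aux_int1 : IntegrableOn (fun t : ℝ => Real.exp (-t) * Real.log t) (Set.Ioc 0 1) := by
  have hm : AEStronglyMeasurable (fun t : ℝ => Real.exp (-t) * Real.log t)
      (volume.restrict (Set.Ioc (0:ℝ) 1)) :=
    ((Real.measurable_exp.comp measurable_neg).mul Real.measurable_log).aestronglyMeasurable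
  have hint : IntegrableOn (fun t : ℝ => 2 * t ^ (-(1/2) : ℝ)) (Set.Ioc 0 1) := by
    have := (intervalIntegral.intervalIntegrable_rpow' (a := 0) (b := 1)
      (by norm_num : (-1:ℝ) < -(1/2)))
    rw [intervalIntegrable_iff_integrableOn_Ioc_of_le zero_le_one] at this
    exact this.const_mul 2
  refine (hint.integrable.mono hm ?_)
  filter_upwards [ae_restrict_mem measurableSet_Ioc] with t ht
  have ht0 : 0 < t := ht.1
  have ht1 : t ≤ 1 := ht.2
  have hlog : |Real.log t| ≤ 2 * t ^ (-(1/2) : ℝ) := by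
    have h1 : Real.log t ≤ 0 := Real.log_nonpos ht0.le ht1
    rw [abs_of_nonpos h1]
    have : -Real.log t = 2 * Real.log (t ^ (-(1/2):ℝ)) := by
      rw [Real.log_rpow ht0]; ring
    rw [this]
    have hpos : (0:ℝ) < t ^ (-(1/2):ℝ) := Real.rpow_pos_of_pos ht0 _
    have := Real.log_le_sub_one_of_pos hpos
    nlinarith [hpos]
  have : ‖Real.exp (-t) * Real.log t‖ ≤ |Real.log t| := by
    rw [norm_mul, Real.norm_eq_abs, Real.norm_eq_abs, abs_of_pos (Real.exp_pos _)]
    nlinarith [Real.exp_le_one_iff.mpr (by linarith : -t ≤ 0), abs_nonneg (Real.log t),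
      Real.exp_pos (-t)]
  calc ‖Real.exp (-t) * Real.log t‖ ≤ |Real.log t| := this
    _ ≤ 2 * t ^ (-(1/2):ℝ) := hlog
    _ ≤ ‖2 * t ^ (-(1/2):ℝ)‖ := le_abs_self _
private lemma aux_int2 : IntegrableOn (fun t : ℝ => (1 - Real.exp (-t)) / t) (Set.Ioc 0 1) := by
  have hm : AEStronglyMeasurable (fun t : ℝ => (1 - Real.exp (-t)) / t)
      (volume.restrict (Set.Ioc (0:ℝ) 1)) :=
    ((measurable_const.sub (Real.measurable_exp.comp measurable_neg)).div
      measurable_id).aestronglyMeasurable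
  have hint : IntegrableOn (fun _ : ℝ => (1:ℝ)) (Set.Ioc 0 1) :=
    integrableOn_const (by simp)
  refine hint.integrable.mono hm ?_
  filter_upwards [ae_restrict_mem measurableSet_Ioc] with t ht
  have ht0 : 0 < t := ht.1
  have h1 : 1 - Real.exp (-t) ≤ t := by nlinarith [Real.add_one_le_exp (-t)]
  have h2 : 0 ≤ 1 - Real.exp (-t) := by
    have : Real.exp (-t) ≤ 1 := Real.exp_le_one_iff.mpr (by linarith)
    linarith
  rw [Real.norm_eq_abs, Real.norm_eq_abs, abs_one, abs_div, abs_of_nonneg h2,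
    abs_of_pos ht0, div_le_one ht0]
  exact h1

private lemma aux_int3 : IntegrableOn (fun t : ℝ => Real.exp (-t) * Real.log t) (Set.Ioi 1) := by
  have hm : AEStronglyMeasurable (fun t : ℝ => Real.exp (-t) * Real.log t)
      (volume.restrict (Set.Ioi (1:ℝ))) :=
    ((Real.measurable_exp.comp measurable_neg).mul Real.measurable_log).aestronglyMeasurable
  have hint : IntegrableOn (fun t : ℝ => Real.exp (-t) * t ^ ((2:ℝ) - 1)) (Set.Ioi 1) :=
    (Real.GammaIntegral_convergent (by norm_num : (0:ℝ) < 2) |>.mono_set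
      (Set.Ioi_subset_Ioi zero_le_one))
  refine hint.integrable.mono hm ?_
  filter_upwards [ae_restrict_mem measurableSet_Ioi] with t ht
  have ht1 : 1 < t := ht
  have h0 : (0:ℝ) < t := by linarith
  have hl0 : 0 ≤ Real.log t := Real.log_nonneg ht1.le
  have hlt : Real.log t ≤ t := (Real.log_le_sub_one_of_pos h0).trans (by linarith)
  rw [Real.norm_eq_abs, Real.norm_eq_abs, abs_mul, abs_mul,
    abs_of_pos (Real.exp_pos _), abs_of_nonneg hl0]
  have : |t ^ ((2:ℝ)-1)| = t := by
    rw [abs_of_pos (Real.rpow_pos_of_pos h0 _)]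
    norm_num
  rw [this]
  exact mul_le_mul_of_nonneg_left hlt (Real.exp_pos _).le

private lemma aux_int4 : IntegrableOn (fun t : ℝ => Real.exp (-t) * t⁻¹) (Set.Ioi 1) := by
  have hm : AEStronglyMeasurable (fun t : ℝ => Real.exp (-t) * t⁻¹)
      (volume.restrict (Set.Ioi (1:ℝ))) :=
    ((Real.measurable_exp.comp measurable_neg).mul measurable_inv).aestronglyMeasurable
  have hint : IntegrableOn (fun t : ℝ => Real.exp (-1 * t)) (Set.Ioi 1) :=
    exp_neg_integrableOn_Ioi 1 one_pos
  refine hint.integrable.mono hm ?_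
  filter_upwards [ae_restrict_mem measurableSet_Ioi] with t ht
  have ht1 : 1 < t := ht
  have h0 : (0:ℝ) < t := by linarith
  rw [Real.norm_eq_abs, Real.norm_eq_abs, abs_mul, abs_of_pos (Real.exp_pos _),
    abs_of_pos (inv_pos.mpr h0), abs_of_pos (Real.exp_pos _), neg_one_mul]
  nlinarith [Real.exp_pos (-t), inv_le_one_of_one_le₀ ht1.le, inv_pos.mpr h0]


private lemma aux_partB : (∫ t in Set.Ioi (1:ℝ), Real.exp (-t) * Real.log t)
    = ∫ t in Set.Ioi (1:ℝ), Real.exp (-t) * t⁻¹ := by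
  have key : (∫ t in Set.Ioi (1:ℝ),
      (Real.exp (-t) * Real.log t - Real.exp (-t) * t⁻¹)) = 0 := by
    have hderiv : ∀ x ∈ Set.Ici (1:ℝ), HasDerivAt (fun t => -(Real.exp (-t) * Real.log t))
        (Real.exp (-x) * Real.log x - Real.exp (-x) * x⁻¹) x := by
      intro x hx
      have hx0 : x ≠ 0 := by intro h; simp [h] at hx; linarith
      have h1 : HasDerivAt (fun t : ℝ => Real.exp (-t)) (-Real.exp (-x)) x := by
        simpa [Function.comp_def] using ((Real.hasDerivAt_exp (-x)).comp x (hasDerivAt_neg x))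
      have h2 : HasDerivAt Real.log x⁻¹ x := Real.hasDerivAt_log hx0
      have := (h1.mul h2).neg
      exact this.congr_deriv (by ring)
    have hint : IntegrableOn
        (fun x => Real.exp (-x) * Real.log x - Real.exp (-x) * x⁻¹) (Set.Ioi 1) :=
      aux_int3.sub aux_int4
    have htop : Tendsto (fun t : ℝ => -(Real.exp (-t) * Real.log t)) atTop (𝓝 0) := by
      have h := tendsto_pow_mul_exp_neg_atTop_nhds_zero 1
      rw [show (0:ℝ) = -0 by norm_num]
      refine Tendsto.neg (squeeze_zero_norm' ?_ h)
      filter_upwards [eventually_ge_atTop (1:ℝ)] with t ht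
      have h0 : (0:ℝ) < t := by linarith
      have hl0 : 0 ≤ Real.log t := Real.log_nonneg ht
      have hlt : Real.log t ≤ t := (Real.log_le_sub_one_of_pos h0).trans (by linarith)
      rw [Real.norm_eq_abs, abs_mul, abs_of_pos (Real.exp_pos _), abs_of_nonneg hl0, pow_one]
      nlinarith [Real.exp_pos (-t)]
    have := integral_Ioi_of_hasDerivAt_of_tendsto' hderiv hint htop
    rw [this]
    simp
  have := integral_sub aux_int3 aux_int4
  rw [key] at this
  linarith [this]


private lemma aux_partA : (∫ t in Set.Ioc (0:ℝ) 1, Real.exp (-t) * Real.log t)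
    = - ∫ t in Set.Ioc (0:ℝ) 1, (1 - Real.exp (-t)) / t := by
  have hderiv : ∀ x ∈ Set.Ioo (0:ℝ) 1, HasDerivAt (fun t => (1 - Real.exp (-t)) * Real.log t)
      (Real.exp (-x) * Real.log x + (1 - Real.exp (-x)) / x) x := by
    intro x hx
    have hx0 : x ≠ 0 := ne_of_gt hx.1
    have h1 : HasDerivAt (fun t : ℝ => 1 - Real.exp (-t)) (Real.exp (-x)) x := by
      have : HasDerivAt (fun t : ℝ => Real.exp (-t)) (-Real.exp (-x)) x := by
        simpa [Function.comp_def] using ((Real.hasDerivAt_exp (-x)).comp x (hasDerivAt_neg x))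
      simpa using (this.const_sub 1)
    have h2 : HasDerivAt Real.log x⁻¹ x := Real.hasDerivAt_log hx0
    simpa [div_eq_mul_inv, Pi.mul_def] using h1.mul h2
  have hint : IntervalIntegrable
      (fun x => Real.exp (-x) * Real.log x + (1 - Real.exp (-x)) / x) volume 0 1 := by
    rw [intervalIntegrable_iff_integrableOn_Ioc_of_le zero_le_one]
    exact aux_int1.add aux_int2
  have h0 : Tendsto (fun t => (1 - Real.exp (-t)) * Real.log t) (𝓝[>] (0:ℝ)) (𝓝 0) := by
    have h := tendsto_log_mul_rpow_nhdsGT_zero one_pos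
    refine squeeze_zero_norm' ?_ (by simpa using h.abs)
    filter_upwards [self_mem_nhdsWithin] with t (ht : 0 < t)
    have h1 : 1 - Real.exp (-t) ≤ t := by nlinarith [Real.add_one_le_exp (-t)]
    have h2 : 0 ≤ 1 - Real.exp (-t) := by
      have : Real.exp (-t) ≤ 1 := Real.exp_le_one_iff.mpr (by linarith)
      linarith
    rw [Real.norm_eq_abs, abs_mul, abs_of_nonneg h2, abs_of_pos ht,
      mul_comm (|Real.log t|) t]
    exact mul_le_mul_of_nonneg_right h1 (abs_nonneg _)
  have h1 : Tendsto (fun t => (1 - Real.exp (-t)) * Real.log t) (𝓝[<] (1:ℝ)) (𝓝 0) := by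
    have : ContinuousAt (fun t => (1 - Real.exp (-t)) * Real.log t) 1 := by
      exact ((continuous_const.sub (Real.continuous_exp.comp continuous_neg)).continuousAt).mul
        (Real.continuousAt_log one_ne_zero)
    have h := this.tendsto.mono_left (nhdsWithin_le_nhds (s := Set.Iio (1:ℝ)))
    simpa using h
  have key := intervalIntegral.integral_eq_sub_of_hasDerivAt_of_tendsto zero_lt_one
    hderiv hint h0 h1
  rw [sub_zero] at key
  have hsplit := intervalIntegral.integral_add
    ((intervalIntegrable_iff_integrableOn_Ioc_of_le zero_le_one).mpr aux_int1)
    ((intervalIntegrable_iff_integrableOn_Ioc_of_le zero_le_one).mpr aux_int2)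
  rw [hsplit] at key
  rw [intervalIntegral.integral_of_le zero_le_one, intervalIntegral.integral_of_le zero_le_one]
    at key
  linarith
private lemma aux_gammaDeriv : HasDerivAt Real.Gamma
    (∫ t in Set.Ioi (0:ℝ), Real.exp (-t) * Real.log t) 1 := by
  set I : ℝ := ∫ t in Set.Ioi (0:ℝ), Real.exp (-t) * Real.log t with hI
  have hC : HasDerivAt Complex.GammaIntegral
      (∫ t : ℝ in Set.Ioi 0, (t : ℂ) ^ ((1:ℂ) - 1) * (Real.log t * Real.exp (-t))) 1 :=
    Complex.hasDerivAt_GammaIntegral (by norm_num)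
  have hD : (∫ t : ℝ in Set.Ioi 0, (t : ℂ) ^ ((1:ℂ) - 1) * (Real.log t * Real.exp (-t)))
      = (I : ℂ) := by
    have h1 : (∫ t : ℝ in Set.Ioi 0, (t : ℂ) ^ ((1:ℂ) - 1) * (Real.log t * Real.exp (-t)))
        = ∫ t : ℝ in Set.Ioi 0, ((Real.exp (-t) * Real.log t : ℝ) : ℂ) := by
      refine setIntegral_congr_fun measurableSet_Ioi (fun t ht => ?_)
      simp only [sub_self, Complex.cpow_zero, one_mul, Complex.ofReal_mul]
      ring
    rw [h1, hI]
    exact _root_.integral_ofReal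
  rw [hD] at hC
  have hG : Complex.Gamma =ᶠ[𝓝 (1:ℂ)] Complex.GammaIntegral := by
    have hopen : IsOpen {z : ℂ | 0 < z.re} := isOpen_lt continuous_const Complex.continuous_re
    filter_upwards [hopen.mem_nhds (by norm_num : (0:ℝ) < (1:ℂ).re)] with z hz
    exact Complex.Gamma_eq_integral hz
  have hC2 : HasDerivAt Complex.Gamma (I : ℂ) 1 := hC.congr_of_eventuallyEq hG
  have hC3 : HasDerivAt Complex.Gamma (I : ℂ) ((1:ℝ) : ℂ) := by
    simpa using hC2
  have hR := hC3.real_of_complex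
  have : (fun x : ℝ => (Complex.Gamma (x : ℂ)).re) = Real.Gamma := by
    funext x
    rw [Complex.Gamma_ofReal, Complex.ofReal_re]
  rw [this] at hR
  simpa using hR

theorem stmt_0 :
    (∫ u in (0:ℝ)..1, (1 - Real.exp (-u)) / u) -
      (∫ u in Set.Ioi (1:ℝ), Real.exp (-u) / u) = Real.eulerMascheroniConstant := by
  have hB : (∫ u in Set.Ioi (1:ℝ), Real.exp (-u) / u)
      = ∫ u in Set.Ioi (1:ℝ), Real.exp (-u) * u⁻¹ := by
    simp_rw [div_eq_mul_inv]
  have hA : (∫ u in (0:ℝ)..1, (1 - Real.exp (-u)) / u)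
      = ∫ u in Set.Ioc (0:ℝ) 1, (1 - Real.exp (-u)) / u :=
    intervalIntegral.integral_of_le zero_le_one
  have hsplit : (∫ t in Set.Ioi (0:ℝ), Real.exp (-t) * Real.log t)
      = (∫ t in Set.Ioc (0:ℝ) 1, Real.exp (-t) * Real.log t)
        + ∫ t in Set.Ioi (1:ℝ), Real.exp (-t) * Real.log t := by
    rw [← Set.Ioc_union_Ioi_eq_Ioi zero_le_one]
    exact setIntegral_union (Set.Ioc_disjoint_Ioi le_rfl) measurableSet_Ioi aux_int1 aux_int3
  have huniq : (∫ t in Set.Ioi (0:ℝ), Real.exp (-t) * Real.log t)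
      = -Real.eulerMascheroniConstant :=
    aux_gammaDeriv.unique Real.hasDerivAt_Gamma_one
  rw [hsplit, aux_partA, aux_partB] at huniq
  rw [hA, hB]
  linarith
end

section
/- For any real b' > 0 and x > 1, ∫_{-π}^{π} θ e^{b' e^{iθ} log x} dθ = (2π/i) ∫₀^{b' log x} (e^{-u} - 1)/u du. -/
open Real Complex intervalIntegral MeasureTheory Set Metric Filter Topology

lemma exp_deriv (w : ℂ) (x : ℝ) :
    HasDerivAt (fun t : ℝ => Complex.exp (t * w)) (w * Complex.exp (x * w)) x := by
  have := (((hasDerivAt_id (x:ℂ)).mul_const w).cexp).comp_ofReal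
  simpa [mul_comm] using this

lemma paramDeriv (ψ : ℝ → ℂ) (hψ : Continuous ψ) (c : ℝ) :
    HasDerivAt (fun c : ℝ => ∫ θ in (-Real.pi)..Real.pi, ψ θ * Complex.exp (c * Complex.exp (θ * I)))
      (∫ θ in (-Real.pi)..Real.pi,
        ψ θ * (Complex.exp (θ * I) * Complex.exp (c * Complex.exp (θ * I)))) c := by
  have hcont : ∀ x : ℝ, Continuous fun θ : ℝ => ψ θ * Complex.exp (x * Complex.exp (θ * I)) := by
    intro x
    exact hψ.mul (Complex.continuous_exp.comp (continuous_const.mul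
      (Complex.continuous_exp.comp (Complex.continuous_ofReal.mul continuous_const))))
  have hcont' : Continuous fun θ : ℝ =>
      ψ θ * (Complex.exp (θ * I) * Complex.exp (c * Complex.exp (θ * I))) := by
    exact hψ.mul ((Complex.continuous_exp.comp (Complex.continuous_ofReal.mul continuous_const)).mul
      (Complex.continuous_exp.comp (continuous_const.mul
        (Complex.continuous_exp.comp (Complex.continuous_ofReal.mul continuous_const)))))
  have key := intervalIntegral.hasDerivAt_integral_of_dominated_loc_of_deriv_le
    (F := fun (x : ℝ) (θ : ℝ) => ψ θ * Complex.exp (x * Complex.exp (θ * I)))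
    (F' := fun (x : ℝ) (θ : ℝ) =>
      ψ θ * (Complex.exp (θ * I) * Complex.exp (x * Complex.exp (θ * I))))
    (x₀ := c) (a := -Real.pi) (b := Real.pi)
    (bound := fun θ => ‖ψ θ‖ * Real.exp (|c| + 1)) (Metric.ball_mem_nhds c one_pos)
    (Filter.Eventually.of_forall fun x => ((hcont x).aestronglyMeasurable))
    ((hcont c).intervalIntegrable (μ := volume) _ _)
    ?meas' ?bound ?bint ?diff
  · exact key.2
  case meas' =>
    exact hcont'.aestronglyMeasurable
  case bound =>
    refine Filter.Eventually.of_forall fun θ _ x hx => ?_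
    have h1 : ‖Complex.exp (θ * I)‖ = 1 := Complex.norm_exp_ofReal_mul_I θ
    have h2 : ‖Complex.exp (x * Complex.exp (θ * I))‖ ≤ Real.exp (|c| + 1) := by
      rw [Complex.norm_exp]
      apply Real.exp_le_exp.2
      have hre : ((x : ℂ) * Complex.exp (θ * I)).re = x * (Complex.exp (θ * I)).re := by
        simp [Complex.mul_re, Complex.ofReal_re, Complex.ofReal_im]
      rw [hre]
      have : |x * (Complex.exp (θ * I)).re| ≤ |x| := by
        rw [abs_mul]
        have : |(Complex.exp (θ * I)).re| ≤ 1 := by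
          have := Complex.abs_re_le_norm (Complex.exp (θ * I))
          rwa [Complex.norm_exp_ofReal_mul_I] at this
        nlinarith [abs_nonneg x]
      have hxc : |x| ≤ |c| + 1 := by
        have := mem_ball_iff_norm.1 hx
        have := abs_sub_abs_le_abs_sub x c
        simp only [Real.norm_eq_abs] at *
        linarith
      calc x * (Complex.exp (θ * I)).re ≤ |x * (Complex.exp (θ * I)).re| := le_abs_self _
        _ ≤ |x| := this
        _ ≤ |c| + 1 := hxc
    calc ‖ψ θ * (Complex.exp (θ * I) * Complex.exp (x * Complex.exp (θ * I)))‖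
        = ‖ψ θ‖ * (‖Complex.exp (θ * I)‖ * ‖Complex.exp (x * Complex.exp (θ * I))‖) := by
          simp [norm_mul]
      _ ≤ ‖ψ θ‖ * Real.exp (|c| + 1) := by
          rw [h1, one_mul]
          exact mul_le_mul_of_nonneg_left h2 (norm_nonneg _)
  case bint =>
    exact ((hψ.norm.mul continuous_const)).intervalIntegrable _ _
  case diff =>
    refine Filter.Eventually.of_forall fun θ _ x _ => ?_
    have := (exp_deriv (Complex.exp (θ * I)) x).const_mul (ψ θ)
    simpa [mul_comm, mul_assoc, mul_left_comm] using this

lemma exp_neg_pi_I : Complex.exp (-(Real.pi * I)) = -1 := by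
  rw [Complex.exp_neg, Complex.exp_pi_mul_I]
  norm_num

lemma cont2 (c : ℝ) : Continuous fun θ : ℝ =>
    Complex.exp (θ * I) * Complex.exp (c * Complex.exp (θ * I)) :=
  (Complex.continuous_exp.comp (Complex.continuous_ofReal.mul continuous_const)).mul
    (Complex.continuous_exp.comp (continuous_const.mul
      (Complex.continuous_exp.comp (Complex.continuous_ofReal.mul continuous_const))))

lemma inner_deriv (c : ℝ) (θ : ℝ) :
    HasDerivAt (fun θ : ℝ => Complex.exp (c * Complex.exp (θ * I)))
      (Complex.exp (c * Complex.exp (θ * I)) * (c * (I * Complex.exp (θ * I)))) θ :=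
  ((exp_deriv I θ).const_mul (c : ℂ)).cexp

lemma deriv_integrand_zero (c : ℝ) :
    (∫ θ in (-Real.pi)..Real.pi,
      Complex.exp (θ * I) * Complex.exp (c * Complex.exp (θ * I))) = 0 := by
  rcases eq_or_ne c 0 with rfl | hc
  · have h : ∀ θ ∈ Set.uIcc (-Real.pi) Real.pi,
        HasDerivAt (fun θ : ℝ => Complex.exp (θ * I) / I)
          (Complex.exp (θ * I) * Complex.exp ((0:ℝ) * Complex.exp (θ * I))) θ := by
      intro θ _
      have := (exp_deriv I θ).div_const I
      convert this using 1
      · rfl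
      have hI : (I : ℂ) ≠ 0 := Complex.I_ne_zero
      field_simp
      simp
    rw [intervalIntegral.integral_eq_sub_of_hasDerivAt h ((cont2 0).intervalIntegrable _ _)]
    push_cast
    rw [neg_mul, Complex.exp_pi_mul_I, exp_neg_pi_I]
    ring
  · have hden : (c : ℂ) * I ≠ 0 := by
      simp [Complex.I_ne_zero, Complex.ofReal_ne_zero, hc]
    have h : ∀ θ ∈ Set.uIcc (-Real.pi) Real.pi,
        HasDerivAt (fun θ : ℝ => Complex.exp (c * Complex.exp (θ * I)) / (c * I))
          (Complex.exp (θ * I) * Complex.exp (c * Complex.exp (θ * I))) θ := by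
      intro θ _
      have := (inner_deriv c θ).div_const ((c : ℂ) * I)
      convert this using 1
      · rfl
      have hc' : (c : ℂ) ≠ 0 := Complex.ofReal_ne_zero.2 hc
      field_simp
    rw [intervalIntegral.integral_eq_sub_of_hasDerivAt h ((cont2 c).intervalIntegrable _ _)]
    push_cast
    rw [neg_mul, Complex.exp_pi_mul_I, exp_neg_pi_I]
    ring

lemma H_eq (c : ℝ) :
    (∫ θ in (-Real.pi)..Real.pi, Complex.exp (c * Complex.exp (θ * I))) = 2 * Real.pi := by
  have hd : ∀ c : ℝ, HasDerivAt
      (fun c : ℝ => ∫ θ in (-Real.pi)..Real.pi, Complex.exp (c * Complex.exp (θ * I))) 0 c := by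
    intro c
    have h1 := paramDeriv (fun _ => (1:ℂ)) continuous_const c
    simp only [one_mul] at h1
    rwa [deriv_integrand_zero c] at h1
  have hconst := is_const_of_deriv_eq_zero
    (f := fun c : ℝ => ∫ θ in (-Real.pi)..Real.pi, Complex.exp (c * Complex.exp (θ * I)))
    (fun x => (hd x).differentiableAt) (fun x => (hd x).deriv) c 0
  rw [hconst]
  push_cast
  simp [intervalIntegral.integral_const]
  ring

lemma parts (c : ℝ) (hc : c ≠ 0) :
    (∫ θ in (-Real.pi)..Real.pi,
        (θ : ℂ) * (Complex.exp (θ * I) * Complex.exp (c * Complex.exp (θ * I)))) =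
      2 * Real.pi * (Complex.exp (-c) - 1) / (c * I) := by
  have hden : (c : ℂ) * I ≠ 0 := by
    simp [Complex.I_ne_zero, Complex.ofReal_ne_zero, hc]
  have hu : ∀ θ ∈ Set.uIcc (-Real.pi) Real.pi,
      HasDerivAt (fun θ : ℝ => (θ : ℂ)) 1 θ := fun θ _ => (hasDerivAt_id θ).ofReal_comp
  have hv : ∀ θ ∈ Set.uIcc (-Real.pi) Real.pi,
      HasDerivAt (fun θ : ℝ => Complex.exp (c * Complex.exp (θ * I)) / (c * I))
        (Complex.exp (θ * I) * Complex.exp (c * Complex.exp (θ * I))) θ := by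
    intro θ _
    have := (inner_deriv c θ).div_const ((c : ℂ) * I)
    convert this using 1
    · rfl
    have hc' : (c : ℂ) ≠ 0 := Complex.ofReal_ne_zero.2 hc
    field_simp
  rw [intervalIntegral.integral_mul_deriv_eq_deriv_mul hu hv
    ((continuous_const).intervalIntegrable _ _)
    ((cont2 c).intervalIntegrable _ _)]
  have hint : (∫ θ in (-Real.pi)..Real.pi,
      (1 : ℂ) * (Complex.exp (c * Complex.exp (θ * I)) / (c * I))) = 2 * Real.pi / (c * I) := by
    simp only [one_mul]
    rw [intervalIntegral.integral_div, H_eq]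
  rw [hint]
  have h1 : Complex.exp ((Real.pi : ℝ) * I) = -1 := by push_cast; exact Complex.exp_pi_mul_I
  have h2 : Complex.exp ((-Real.pi : ℝ) * I) = -1 := by
    push_cast
    rw [neg_mul, Complex.exp_neg, Complex.exp_pi_mul_I]
    norm_num
  rw [h1, h2]
  push_cast
  rw [mul_neg_one]
  field_simp
  ring

lemma g_integrable (c : ℝ) (hc : 0 < c) :
    IntervalIntegrable (fun u : ℝ => (Real.exp (-u) - 1) / u) volume 0 c := by
  apply IntervalIntegrable.mono_fun' (g := fun _ : ℝ => (1:ℝ))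
    (intervalIntegrable_const)
  · exact ((((Real.measurable_exp.comp measurable_neg).sub measurable_const).div
      measurable_id).aestronglyMeasurable)
  · rw [Filter.EventuallyLE, ae_restrict_iff' measurableSet_uIoc]
    refine Filter.Eventually.of_forall fun u hu => ?_
    rw [Set.uIoc_of_le hc.le] at hu
    have hu0 : 0 < u := hu.1
    have h1 : Real.exp (-u) ≤ 1 := by
      rw [Real.exp_le_one_iff]; linarith
    have h2 : 1 - u ≤ Real.exp (-u) := by
      have := Real.add_one_le_exp (-u)
      linarith
    rw [Real.norm_eq_abs, abs_div, abs_of_pos hu0, div_le_one hu0, abs_of_nonpos (by linarith)]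
    linarith

lemma G_deriv (c : ℝ) (hc : 0 < c) :
    HasDerivAt (fun c : ℝ => ∫ u in (0:ℝ)..c, (Real.exp (-u) - 1) / u)
      ((Real.exp (-c) - 1) / c) c := by
  apply intervalIntegral.integral_hasDerivAt_right (g_integrable c hc)
  · exact ((((Real.measurable_exp.comp measurable_neg).sub
      measurable_const).div measurable_id).stronglyMeasurable).stronglyMeasurableAtFilter
  · exact ContinuousAt.div
      (((Real.continuous_exp.comp continuous_neg).sub continuous_const).continuousAt)
      continuousAt_id hc.ne'

theorem stmt_3 (b' x : ℝ) (hb' : 0 < b') (hx : 1 < x) :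
    (∫ θ in (-Real.pi)..Real.pi,
        (θ : ℂ) * Complex.exp ((b' : ℂ) * Complex.exp (θ * Complex.I) * (Real.log x : ℂ))) =
      (2 * Real.pi / Complex.I) *
        ((∫ u in (0:ℝ)..(b' * Real.log x), (Real.exp (-u) - 1) / u : ℝ) : ℂ) := by
  set c₀ : ℝ := b' * Real.log x with hc₀def
  have hc₀ : 0 < c₀ := mul_pos hb' (Real.log_pos hx)
  set F : ℝ → ℂ := fun c => ∫ θ in (-Real.pi)..Real.pi,
    (θ : ℂ) * Complex.exp (c * Complex.exp (θ * I)) with hFdef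
  set G : ℝ → ℝ := fun c => ∫ u in (0:ℝ)..c, (Real.exp (-u) - 1) / u with hGdef
  set φ : ℝ → ℂ := fun c => F c - (2 * Real.pi / I) * (G c : ℂ) with hφdef
  -- rewrite LHS as F c₀
  have hLHS : (∫ θ in (-Real.pi)..Real.pi,
      (θ : ℂ) * Complex.exp ((b' : ℂ) * Complex.exp (θ * Complex.I) * (Real.log x : ℂ)))
      = F c₀ := by
    rw [hFdef]
    apply intervalIntegral.integral_congr
    intro θ _
    have harg : (b' : ℂ) * Complex.exp (θ * I) * (Real.log x : ℂ) = (c₀ : ℂ) * Complex.exp (θ * I) := by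
      rw [hc₀def]; push_cast; ring
    simp only [harg]
  rw [hLHS]
  -- so it suffices that φ c₀ = 0
  suffices hsuff : φ c₀ = 0 by
    have := sub_eq_zero.1 hsuff
    rw [this]
  have hF : ∀ c : ℝ, HasDerivAt F
      (∫ θ in (-Real.pi)..Real.pi,
        (θ : ℂ) * (Complex.exp (θ * I) * Complex.exp (c * Complex.exp (θ * I)))) c :=
    fun c => paramDeriv (fun θ => (θ : ℂ)) Complex.continuous_ofReal c
  have hφ : ∀ c : ℝ, 0 < c → HasDerivAt φ 0 c := by
    intro c hc
    have h1 : HasDerivAt F (2 * Real.pi * (Complex.exp (-c) - 1) / (c * I)) c := by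
      have := hF c
      rwa [parts c hc.ne'] at this
    have h2 : HasDerivAt (fun c : ℝ => (2 * Real.pi / I) * (G c : ℂ))
        ((2 * Real.pi / I) * (((Real.exp (-c) - 1) / c : ℝ) : ℂ)) c :=
      ((G_deriv c hc).ofReal_comp).const_mul _
    have h3 := h1.sub h2
    convert h3 using 1
    · rfl
    · rfl
    have hcne : (c : ℂ) ≠ 0 := Complex.ofReal_ne_zero.2 hc.ne'
    have hIne : (I : ℂ) ≠ 0 := Complex.I_ne_zero
    push_cast [Complex.ofReal_exp]
    field_simp
    have hI2 : I * I = -1 := Complex.I_mul_I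
    ring
  -- φ is constant on (0, c₀]
  have hconst : ∀ ε : ℝ, ε ∈ Set.Ioc 0 c₀ → φ c₀ = φ ε := by
    intro ε hε
    have := constant_of_has_deriv_right_zero (f := φ) (a := ε) (b := c₀)
      (fun y hy => ((hφ y (lt_of_lt_of_le hε.1 hy.1)).continuousAt).continuousWithinAt)
      (fun y hy => (hφ y (lt_of_lt_of_le hε.1 hy.1)).hasDerivWithinAt)
    exact this c₀ ⟨hε.2, le_refl _⟩
  -- limits as ε → 0⁺
  have hF0 : F 0 = 0 := by
    rw [hFdef]
    simp only [Complex.ofReal_zero, zero_mul, Complex.exp_zero, mul_one]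
    rw [intervalIntegral.integral_ofReal]
    simp [integral_id]
  have hFt : Tendsto F (𝓝[>] (0:ℝ)) (𝓝 0) := by
    have := (hF 0).continuousAt.tendsto
    rw [hF0] at this
    exact this.mono_left nhdsWithin_le_nhds
  have hGt : Tendsto (fun ε => (G ε : ℂ)) (𝓝[>] (0:ℝ)) (𝓝 0) := by
    have hGr : Tendsto G (𝓝[>] (0:ℝ)) (𝓝 0) := by
      apply squeeze_zero_norm' (a := fun ε : ℝ => ε)
      · filter_upwards [self_mem_nhdsWithin] with ε (hε : 0 < ε)
        have hb : ∀ u ∈ Set.uIoc (0:ℝ) ε, ‖(Real.exp (-u) - 1) / u‖ ≤ 1 := by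
          intro u hu
          rw [Set.uIoc_of_le hε.le] at hu
          have hu0 : 0 < u := hu.1
          have h2 : 1 - u ≤ Real.exp (-u) := by
            have := Real.add_one_le_exp (-u); linarith
          have h1 : Real.exp (-u) ≤ 1 := by rw [Real.exp_le_one_iff]; linarith
          rw [Real.norm_eq_abs, abs_div, abs_of_pos hu0, div_le_one hu0,
            abs_of_nonpos (by linarith)]
          linarith
        have := intervalIntegral.norm_integral_le_of_norm_le_const hb
        simpa [abs_of_pos hε] using this
      · exact tendsto_id.mono_left nhdsWithin_le_nhds
    have : Tendsto (fun ε => (G ε : ℂ)) (𝓝[>] (0:ℝ)) (𝓝 ((0:ℝ) : ℂ)) :=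
      (Complex.continuous_ofReal.tendsto _).comp hGr
    simpa using this
  have hφt : Tendsto φ (𝓝[>] (0:ℝ)) (𝓝 0) := by
    have := hFt.sub (hGt.const_mul (2 * (Real.pi:ℂ) / I))
    simpa only [mul_zero, sub_zero] using this
  have hev : (fun ε : ℝ => φ c₀) =ᶠ[𝓝[>] (0:ℝ)] φ := by
    filter_upwards [Ioc_mem_nhdsGT_of_mem ⟨le_refl _, hc₀⟩] with ε hε
    exact hconst ε hε
  have : Tendsto (fun _ : ℝ => φ c₀) (𝓝[>] (0:ℝ)) (𝓝 0) := hφt.congr' hev.symm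
  exact tendsto_nhds_unique tendsto_const_nhds this
end

section
/- Let b : ℕ → ℂ be supported on primes, let m be an integer and M a complex constant, and suppose Δ₂(u) := ∑_{p ≤ u} b(p)/p - m log log u - M satisfies |Δ₂(u)| ≤ A e^{-c√(log u)} for all u ≥ 2, with constants A > 0 and c > 0. Then for every 0 < c' < c there is a constant M₁ such that for all x ≥ 2, ∑_{p ≤ x} b(p) (log p)/p = m log x + M₁ + O(e^{-c'√(log x)}), where M₁ = -∫₂^∞ Δ₂(u)/u du + M log 2 + m (log 2)(log log 2 - 1). -/
open Real Filter MeasureTheory Set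

lemma auxH_deriv (c : ℝ) (hc : 0 < c) {u : ℝ} (hu : 2 ≤ u) :
    HasDerivAt (fun v : ℝ => -(2/c) * ((Real.sqrt (Real.log v) + 1/c) *
      Real.exp (-c * Real.sqrt (Real.log v))))
      (Real.exp (-c * Real.sqrt (Real.log u)) / u) u := by
  have hu0 : (0:ℝ) < u := by linarith
  have hlog : 0 < Real.log u := Real.log_pos (by linarith)
  have hssq : Real.sqrt (Real.log u) ≠ 0 := by positivity
  have hs : HasDerivAt (fun v : ℝ => Real.sqrt (Real.log v))
      (1 / (2 * Real.sqrt (Real.log u)) * u⁻¹) u :=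
    (Real.hasDerivAt_sqrt hlog.ne').comp u (Real.hasDerivAt_log hu0.ne')
  have he : HasDerivAt (fun v : ℝ => Real.exp (-c * Real.sqrt (Real.log v)))
      (Real.exp (-c * Real.sqrt (Real.log u)) * (-c * (1 / (2 * Real.sqrt (Real.log u)) * u⁻¹))) u :=
    (hs.const_mul (-c)).exp
  have h := ((hs.add_const (1/c)).mul he).const_mul (-(2/c))
  refine h.congr_deriv ?_
  field_simp
  ring

lemma aux_sqrt_log_atTop : Tendsto (fun v : ℝ => Real.sqrt (Real.log v)) atTop atTop := by
  have h1 : Tendsto Real.sqrt atTop atTop := by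
    apply tendsto_atTop_atTop_of_monotone (fun a b hab => Real.sqrt_le_sqrt hab)
    exact fun b => ⟨b^2, by rw [Real.sqrt_sq_eq_abs]; exact le_abs_self b⟩
  exact h1.comp Real.tendsto_log_atTop

lemma auxH_tendsto (c : ℝ) (hc : 0 < c) :
    Tendsto (fun v : ℝ => -(2/c) * ((Real.sqrt (Real.log v) + 1/c) *
      Real.exp (-c * Real.sqrt (Real.log v)))) atTop (nhds 0) := by
  have hcs : Tendsto (fun s : ℝ => c * s) atTop atTop :=
    Tendsto.const_mul_atTop hc tendsto_id
  have h1 : Tendsto (fun s : ℝ => s * Real.exp (-c * s)) atTop (nhds 0) := by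
    have := ((tendsto_pow_mul_exp_neg_atTop_nhds_zero 1).comp hcs).const_mul (1/c)
    simp only [Function.comp, pow_one, mul_zero] at this
    refine this.congr fun s => ?_
    field_simp
  have h2 : Tendsto (fun s : ℝ => Real.exp (-c * s)) atTop (nhds 0) := by
    have := Real.tendsto_exp_neg_atTop_nhds_zero.comp hcs
    exact this.congr fun s => by simp [Function.comp, neg_mul]
  have h3 : Tendsto (fun s : ℝ => -(2/c) * ((s + 1/c) * Real.exp (-c * s))) atTop (nhds 0) := by
    have := ((h1.add (h2.const_mul (1/c))).const_mul (-(2/c)))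
    simp only [add_zero, mul_zero, zero_add] at this
    refine this.congr fun s => by ring
  exact h3.comp aux_sqrt_log_atTop

lemma aux_tail (c : ℝ) (hc : 0 < c) {x : ℝ} (hx : 2 ≤ x) :
    IntegrableOn (fun u : ℝ => Real.exp (-c * Real.sqrt (Real.log u)) / u) (Set.Ioi x) ∧
    ∫ u in Set.Ioi x, Real.exp (-c * Real.sqrt (Real.log u)) / u
      = (2/c) * ((Real.sqrt (Real.log x) + 1/c) * Real.exp (-c * Real.sqrt (Real.log x))) := by
  have hderiv : ∀ t ∈ Set.Ici x, HasDerivAt (fun v : ℝ => -(2/c) * ((Real.sqrt (Real.log v) + 1/c) *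
      Real.exp (-c * Real.sqrt (Real.log v)))) (Real.exp (-c * Real.sqrt (Real.log t)) / t) t :=
    fun t ht => auxH_deriv c hc (le_trans hx ht)
  have hpos : ∀ t ∈ Set.Ioi x, 0 ≤ Real.exp (-c * Real.sqrt (Real.log t)) / t :=
    fun t ht => div_nonneg (Real.exp_pos _).le (by simp only [Set.mem_Ioi] at ht; linarith)
  have htd := auxH_tendsto c hc
  refine ⟨integrableOn_Ioi_deriv_of_nonneg' hderiv hpos htd, ?_⟩
  rw [integral_Ioi_of_hasDerivAt_of_nonneg' hderiv hpos htd]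
  ring

lemma aux_mul_exp_le (ε : ℝ) (hε : 0 < ε) {s : ℝ} (hs : 0 ≤ s) :
    s * Real.exp (-ε * s) ≤ 1/ε := by
  have h : ε * s ≤ Real.exp (ε * s) := le_trans (by linarith) (Real.add_one_le_exp (ε * s))
  rw [neg_mul, Real.exp_neg, ← div_eq_mul_inv, div_le_div_iff₀ (Real.exp_pos _) hε]
  nlinarith

lemma aux_sq_mul_exp_le (ε : ℝ) (hε : 0 < ε) {s : ℝ} (hs : 0 ≤ s) :
    s^2 * Real.exp (-ε * s) ≤ 4/ε^2 := by
  have h := aux_mul_exp_le (ε/2) (by linarith) hs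
  have key : s^2 * Real.exp (-ε*s) = (s * Real.exp (-(ε/2)*s))^2 := by
    rw [mul_pow, pow_two (Real.exp _), ← Real.exp_add]
    ring_nf
  rw [key]
  calc (s * Real.exp (-(ε/2)*s))^2 ≤ (1/(ε/2))^2 :=
        pow_le_pow_left₀ (by positivity) h 2
    _ = 4/ε^2 := by field_simp; ring

lemma aux_sum_primes (h : ℕ → ℂ) (hh : ∀ k, ¬ k.Prime → h k = 0) (n : ℕ) :
    ∑ k ∈ Finset.Icc 0 n, h k = ∑ p ∈ Nat.primesBelow (n+1), h p := by
  rw [← Finset.Ico_add_one_right_eq_Icc, ← Finset.range_eq_Ico, Nat.primesBelow]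
  exact (Finset.sum_filter_of_ne (fun x _ hx => by_contra fun hp => hx (hh x hp))).symm

lemma aux_loglog_integral {x : ℝ} (hx : 2 ≤ x) :
    ∫ t in Set.Ioc 2 x, Real.log (Real.log t) / t
      = Real.log x * (Real.log (Real.log x) - 1) - Real.log 2 * (Real.log (Real.log 2) - 1) := by
  rw [← intervalIntegral.integral_of_le hx]
  apply intervalIntegral.integral_eq_sub_of_hasDerivAt
  · intro t ht
    rw [Set.uIcc_of_le hx] at ht
    have ht0 : (0:ℝ) < t := by have := ht.1; linarith
    have hlt : 0 < Real.log t := Real.log_pos (by have := ht.1; linarith)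
    have h1 : HasDerivAt Real.log t⁻¹ t := Real.hasDerivAt_log ht0.ne'
    have h2 : HasDerivAt (fun v : ℝ => Real.log (Real.log v)) ((Real.log t)⁻¹ * t⁻¹) t :=
      (Real.hasDerivAt_log hlt.ne').comp t h1
    have h := h1.mul (h2.sub_const 1)
    refine h.congr_deriv ?_
    field_simp
    ring
  · apply ContinuousOn.intervalIntegrable
    intro t ht
    rw [Set.uIcc_of_le hx] at ht
    have ht0 : (0:ℝ) < t := by have := ht.1; linarith
    have hlt : 0 < Real.log t := Real.log_pos (by have := ht.1; linarith)
    exact (((Real.continuousAt_log hlt.ne').comp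
      (Real.continuousAt_log ht0.ne')).div continuousAt_id ht0.ne').continuousWithinAt

lemma aux_inv_integral {x : ℝ} (hx : 2 ≤ x) :
    ∫ t in Set.Ioc 2 x, t⁻¹ = Real.log x - Real.log 2 := by
  rw [← intervalIntegral.integral_of_le hx, integral_inv_of_pos two_pos (by linarith),
    Real.log_div (by linarith) (by norm_num)]

theorem stmt_8 (b : ℕ → ℂ) (hsupp : ∀ n : ℕ, ¬ n.Prime → b n = 0)
    (m : ℤ) (M : ℂ) (A c : ℝ) (hA : 0 < A) (hc : 0 < c)
    (Δ₂ : ℝ → ℂ)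
    (hΔ₂def : ∀ u : ℝ, Δ₂ u =
      (∑ p ∈ Nat.primesBelow (⌊u⌋₊ + 1), b p / (p : ℂ)) -
        (m : ℂ) * (Real.log (Real.log u) : ℂ) - M)
    (hΔ₂bd : ∀ u : ℝ, 2 ≤ u → ‖Δ₂ u‖ ≤ A * Real.exp (-c * Real.sqrt (Real.log u))) :
    ∀ c' : ℝ, 0 < c' → c' < c →
      ∃ M₁ : ℂ, M₁ = -(∫ u in Set.Ioi (2:ℝ), Δ₂ u / (u : ℂ)) +
          M * (Real.log 2 : ℂ) +
          (m : ℂ) * (Real.log 2 : ℂ) * ((Real.log (Real.log 2) : ℂ) - 1) ∧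
        ∃ K : ℝ, ∀ x : ℝ, 2 ≤ x →
          ‖(∑ p ∈ Nat.primesBelow (⌊x⌋₊ + 1), b p * (Real.log p : ℂ) / (p : ℂ)) -
              (m : ℂ) * (Real.log x : ℂ) - M₁‖
            ≤ K * Real.exp (-c' * Real.sqrt (Real.log x)) := by
  intro c' hc'0 hc'c
  set P : ℝ → ℂ := fun u => ∑ p ∈ Nat.primesBelow (⌊u⌋₊ + 1), b p / (p:ℂ) with hP
  set J : ℂ := ∫ u in Set.Ioi (2:ℝ), Δ₂ u / (u : ℂ) with hJ
  set ε : ℝ := c - c' with hε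
  have hε0 : 0 < ε := by simp [hε]; linarith
  -- measurability and integrability of Δ₂ u / u on Ioi 2
  have hΔmeas : Measurable Δ₂ := by
    obtain ⟨F, hF⟩ : ∃ F : ℕ → ℂ, F = fun n => ∑ p ∈ Nat.primesBelow (n + 1), b p / (p:ℂ) :=
      ⟨_, rfl⟩
    have : Δ₂ = fun u : ℝ => F ⌊u⌋₊ -
        (m : ℂ) * ((Real.log (Real.log u) : ℝ) : ℂ) - M := by
      funext u; rw [hΔ₂def u, hF]
    rw [this]
    exact ((measurable_from_top.comp Nat.measurable_floor).sub
      ((Complex.measurable_ofReal.comp (Real.measurable_log.comp Real.measurable_log)).const_mul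
        _)).sub measurable_const
  have hΔdivmeas : Measurable (fun u : ℝ => Δ₂ u / (u:ℂ)) :=
    hΔmeas.div Complex.measurable_ofReal
  have hbnd : ∀ u : ℝ, u ∈ Set.Ioi (2:ℝ) →
      ‖Δ₂ u / (u:ℂ)‖ ≤ A * (Real.exp (-c * Real.sqrt (Real.log u)) / u) := by
    intro u hu
    have hu0 : (0:ℝ) < u := lt_trans two_pos hu.out
    rw [norm_div, Complex.norm_real, Real.norm_eq_abs, abs_of_pos hu0]
    calc ‖Δ₂ u‖ / u ≤ (A * Real.exp (-c * Real.sqrt (Real.log u))) / u := by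
          gcongr
          exact hΔ₂bd u hu.out.le
      _ = A * (Real.exp (-c * Real.sqrt (Real.log u)) / u) := by ring
  have hΔint : IntegrableOn (fun u : ℝ => Δ₂ u / (u:ℂ)) (Set.Ioi (2:ℝ)) := by
    apply Integrable.mono' (((aux_tail c hc le_rfl).1).const_mul A)
      hΔdivmeas.aestronglyMeasurable
    exact (ae_restrict_iff' measurableSet_Ioi).mpr (Filter.Eventually.of_forall hbnd)
  refine ⟨-J + M * (Real.log 2 : ℂ) + (m : ℂ) * (Real.log 2 : ℂ) *
      ((Real.log (Real.log 2) : ℂ) - 1), rfl, ?_⟩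
  refine ⟨A * (4/ε^2) + A * (2/c) * (1/ε + 1/c), ?_⟩
  intro x hx
  set R : ℂ := ∫ u in Set.Ioi x, Δ₂ u / (u:ℂ) with hR
  have hRint : IntegrableOn (fun u : ℝ => Δ₂ u / (u:ℂ)) (Set.Ioi x) :=
    hΔint.mono_set (Set.Ioi_subset_Ioi hx)
  -- split J
  have hsplit : J = (∫ t in Set.Ioc 2 x, Δ₂ t / (t:ℂ)) + R := by
    rw [hJ, ← Set.Ioc_union_Ioi_eq_Ioi hx]
    exact setIntegral_union (Set.Ioc_disjoint_Ioi le_rfl) measurableSet_Ioi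
      (hΔint.mono_set Set.Ioc_subset_Ioi_self) hRint
  -- bound on R
  have hRbound : ‖R‖ ≤ A * ((2/c) * ((Real.sqrt (Real.log x) + 1/c) *
      Real.exp (-c * Real.sqrt (Real.log x)))) := by
    have hb2 : ∀ᵐ u ∂(volume.restrict (Set.Ioi x)),
        ‖Δ₂ u / (u:ℂ)‖ ≤ A * (Real.exp (-c * Real.sqrt (Real.log u)) / u) :=
      (ae_restrict_iff' measurableSet_Ioi).mpr (Filter.Eventually.of_forall
        (fun u hu => hbnd u (Set.mem_Ioi.mpr (lt_of_le_of_lt hx hu.out))))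
    have h1 := norm_integral_le_of_norm_le (((aux_tail c hc hx).1).const_mul A) hb2
    rw [integral_const_mul, (aux_tail c hc hx).2] at h1
    exact h1
  -- the Abel summation identity
  have hAbel : ∑ p ∈ Nat.primesBelow (⌊x⌋₊ + 1), b p * (Real.log p : ℂ) / (p : ℂ)
      = (Real.log x : ℂ) * P x
        - ∫ t in Set.Ioc 1 x, ((t : ℂ))⁻¹ * P t := by
    set c₀ : ℕ → ℂ := fun k => b k / k with hc₀
    have hc00 : c₀ 0 = 0 := by simp [hc₀]
    set f : ℝ → ℂ := fun t => ((Real.log t : ℝ) : ℂ) with hf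
    have hder : ∀ t : ℝ, 1 ≤ t → HasDerivAt f ((t⁻¹ : ℝ) : ℂ) t := by
      intro t ht
      exact (Real.hasDerivAt_log (by linarith)).ofReal_comp
    have hderiv_eq : ∀ t : ℝ, 1 ≤ t → deriv f t = ((t⁻¹ : ℝ) : ℂ) :=
      fun t ht => (hder t ht).deriv
    have hf_diff : ∀ t ∈ Set.Icc (1:ℝ) x, DifferentiableAt ℝ f t :=
      fun t ht => (hder t ht.1).differentiableAt
    have hf_int : IntegrableOn (deriv f) (Set.Icc 1 x) := by
      have hcont : ContinuousOn (fun t : ℝ => ((t⁻¹ : ℝ) : ℂ)) (Set.Icc 1 x) := by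
        apply Complex.continuous_ofReal.comp_continuousOn
        exact ContinuousOn.inv₀ continuousOn_id (fun t ht => by
          have := ht.1; intro h; rw [h] at this; linarith)
      exact (hcont.integrableOn_Icc).congr_fun
        (fun t ht => (hderiv_eq t ht.1).symm) measurableSet_Icc
    have habel := sum_mul_eq_sub_integral_mul₀ c₀ hc00 x hf_diff hf_int
    have hs1 : ∀ n : ℕ, ∑ k ∈ Finset.Icc 0 n, c₀ k
        = ∑ p ∈ Nat.primesBelow (n+1), b p / (p:ℂ) := by
      intro n; exact aux_sum_primes c₀ (fun k hk => by simp [hc₀, hsupp k hk]) n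
    have hs2 : ∑ k ∈ Finset.Icc 0 ⌊x⌋₊, f k * c₀ k
        = ∑ p ∈ Nat.primesBelow (⌊x⌋₊+1), b p * (Real.log p : ℂ) / (p:ℂ) := by
      rw [aux_sum_primes (fun k => f k * c₀ k) (fun k hk => by simp [hc₀, hf, hsupp k hk]) ⌊x⌋₊]
      exact Finset.sum_congr rfl fun p _ => by simp only [hc₀, hf]; ring
    rw [hs2, hs1] at habel
    rw [habel]
    congr 1
    apply setIntegral_congr_fun measurableSet_Ioc
    intro t ht
    show deriv f t * ∑ k ∈ Finset.Icc 0 ⌊t⌋₊, c₀ k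
        = ((t : ℂ))⁻¹ * ∑ p ∈ Nat.primesBelow (⌊t⌋₊+1), b p / (p:ℂ)
    rw [hderiv_eq t ht.1.le, hs1 ⌊t⌋₊, Complex.ofReal_inv]
  -- reduce the integral from Ioc 1 x to Ioc 2 x
  have hcongr : ∀ t ∈ Set.Ioc (2:ℝ) x, ((t : ℂ))⁻¹ * P t
      = Δ₂ t / (t:ℂ) + ((m:ℂ) * ((Real.log (Real.log t) / t : ℝ) : ℂ)
          + M * ((t⁻¹ : ℝ) : ℂ)) := by
    intro t ht
    have ht0 : (0:ℝ) < t := by have := ht.1; linarith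
    have htC : (t : ℂ) ≠ 0 := Complex.ofReal_ne_zero.mpr ht0.ne'
    have hPt : P t = Δ₂ t + (m:ℂ) * ((Real.log (Real.log t) : ℝ) : ℂ) + M := by
      rw [hΔ₂def t]; ring
    rw [hPt]
    push_cast
    field_simp
    ring
  have hi2a : IntegrableOn (fun t : ℝ => (m:ℂ) * ((Real.log (Real.log t) / t : ℝ) : ℂ))
      (Set.Ioc 2 x) := by
    apply ContinuousOn.integrableOn_Icc (a := (2:ℝ)) (b := x) ?_ |>.mono_set
      Set.Ioc_subset_Icc_self
    intro t ht
    have ht0 : (0:ℝ) < t := by have := ht.1; linarith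
    have hlt : 0 < Real.log t := Real.log_pos (by have := ht.1; linarith)
    exact (continuousAt_const.mul (Complex.continuous_ofReal.continuousAt.comp
      ((((Real.continuousAt_log hlt.ne').comp (Real.continuousAt_log ht0.ne')).div
        continuousAt_id ht0.ne')))).continuousWithinAt
  have hi2b : IntegrableOn (fun t : ℝ => M * ((t⁻¹ : ℝ) : ℂ)) (Set.Ioc 2 x) := by
    apply ContinuousOn.integrableOn_Icc (a := (2:ℝ)) (b := x) ?_ |>.mono_set
      Set.Ioc_subset_Icc_self
    intro t ht
    have ht0 : (0:ℝ) < t := by have := ht.1; linarith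
    exact (continuousAt_const.mul (Complex.continuous_ofReal.continuousAt.comp
      (ContinuousAt.inv₀ continuousAt_id ht0.ne'))).continuousWithinAt
  have hint2 : IntegrableOn (fun t : ℝ => (m:ℂ) * ((Real.log (Real.log t) / t : ℝ) : ℂ)
      + M * ((t⁻¹ : ℝ) : ℂ)) (Set.Ioc 2 x) := hi2a.add hi2b
  have hint1 : IntegrableOn (fun t : ℝ => Δ₂ t / (t:ℂ)) (Set.Ioc 2 x) :=
    hΔint.mono_set Set.Ioc_subset_Ioi_self
  have hgi : IntegrableOn (fun t : ℝ => ((t : ℂ))⁻¹ * P t) (Set.Ioc 2 x) :=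
    IntegrableOn.congr_fun (hint1.add hint2) (fun t ht => (hcongr t ht).symm) measurableSet_Ioc
  have hzero : ∀ t ∈ Set.Ioo (1:ℝ) 2, ((t : ℂ))⁻¹ * P t = 0 := by
    intro t ht
    have hfl : ⌊t⌋₊ = 1 := Nat.floor_eq_on_Ico 1 t
      ⟨by push_cast; exact ht.1.le, by push_cast; linarith [ht.2]⟩
    have hpb : Nat.primesBelow 2 = ∅ := by decide
    simp only [hP, hfl, hpb]
    simp
  have hred : (∫ t in Set.Ioc 1 x, ((t : ℂ))⁻¹ * P t)
      = ∫ t in Set.Ioc 2 x, ((t : ℂ))⁻¹ * P t := by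
    have hres : volume.restrict (Set.Ioc (1:ℝ) 2) = volume.restrict (Set.Ioo (1:ℝ) 2) :=
      (Measure.restrict_congr_set Ioo_ae_eq_Ioc).symm
    have hz12 : IntegrableOn (fun t : ℝ => ((t : ℂ))⁻¹ * P t) (Set.Ioc 1 2) := by
      rw [IntegrableOn, hres]
      exact (integrable_zero _ _ _).congr ((ae_restrict_iff' measurableSet_Ioo).mpr
        (Filter.Eventually.of_forall (fun t ht => (hzero t ht).symm)))
    have hi12 : (∫ t in Set.Ioc (1:ℝ) 2, ((t : ℂ))⁻¹ * P t) = 0 := by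
      rw [hres, setIntegral_congr_fun measurableSet_Ioo hzero]
      simp
    rw [← Set.Ioc_union_Ioc_eq_Ioc (by norm_num : (1:ℝ) ≤ 2) hx,
      setIntegral_union (Set.Ioc_disjoint_Ioc_of_le le_rfl) measurableSet_Ioc hz12 hgi, hi12, zero_add]
  -- compute the integral over Ioc 2 x
  have hIoc2 : (∫ t in Set.Ioc 2 x, ((t : ℂ))⁻¹ * P t)
      = (J - R) + ((m:ℂ) * ((Real.log x * (Real.log (Real.log x) - 1)
          - Real.log 2 * (Real.log (Real.log 2) - 1) : ℝ) : ℂ)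
        + M * ((Real.log x - Real.log 2 : ℝ) : ℂ)) := by
    rw [setIntegral_congr_fun measurableSet_Ioc hcongr, integral_add hint1 hint2]
    congr 1
    · rw [eq_sub_iff_add_eq]; exact hsplit.symm
    · have e1 : (∫ t in Set.Ioc 2 x, ((Real.log (Real.log t) / t : ℝ) : ℂ))
          = ((∫ t in Set.Ioc 2 x, Real.log (Real.log t) / t : ℝ) : ℂ) := integral_ofReal
      have e2 : (∫ t in Set.Ioc 2 x, ((t⁻¹ : ℝ) : ℂ))
          = ((∫ t in Set.Ioc 2 x, t⁻¹ : ℝ) : ℂ) := integral_ofReal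
      rw [integral_add hi2a hi2b, integral_const_mul, integral_const_mul, e1, e2,
        aux_loglog_integral hx, aux_inv_integral hx]
  -- final identity
  have hfinal : (∑ p ∈ Nat.primesBelow (⌊x⌋₊ + 1), b p * (Real.log p : ℂ) / (p : ℂ))
      - (m : ℂ) * (Real.log x : ℂ)
      - (-J + M * (Real.log 2 : ℂ) + (m : ℂ) * (Real.log 2 : ℂ) *
          ((Real.log (Real.log 2) : ℂ) - 1))
      = Δ₂ x * (Real.log x : ℂ) + R := by
    have hPx : P x = Δ₂ x + (m:ℂ) * ((Real.log (Real.log x) : ℝ) : ℂ) + M := by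
      rw [hΔ₂def x]; ring
    rw [hAbel, hred, hIoc2, hPx]
    push_cast
    ring
  rw [hfinal]
  -- final estimate
  have hL0 : 0 ≤ Real.log x := Real.log_nonneg (by linarith)
  set s : ℝ := Real.sqrt (Real.log x) with hs
  have hs0 : 0 ≤ s := Real.sqrt_nonneg _
  have hs2' : s^2 = Real.log x := Real.sq_sqrt hL0
  have hEsplit : Real.exp (-c * s) = Real.exp (-ε * s) * Real.exp (-c' * s) := by
    rw [← Real.exp_add]; congr 1; rw [hε]; ring
  have hEε1 : Real.exp (-ε * s) ≤ 1 := Real.exp_le_one_iff.mpr (by nlinarith)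
  have hsE := aux_mul_exp_le ε hε0 hs0
  have hs2E := aux_sq_mul_exp_le ε hε0 hs0
  have hterm1 : ‖Δ₂ x * (Real.log x : ℂ)‖ ≤ A * (4/ε^2) * Real.exp (-c' * s) := by
    rw [norm_mul, Complex.norm_real, Real.norm_eq_abs, abs_of_nonneg hL0]
    calc ‖Δ₂ x‖ * Real.log x ≤ (A * Real.exp (-c * s)) * Real.log x := by
          gcongr; exact hΔ₂bd x hx
      _ = A * (s^2 * Real.exp (-ε * s)) * Real.exp (-c' * s) := by
          rw [hEsplit, ← hs2']; ring
      _ ≤ A * (4/ε^2) * Real.exp (-c' * s) := by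
          gcongr
  have hterm2 : ‖R‖ ≤ A * (2/c) * (1/ε + 1/c) * Real.exp (-c' * s) := by
    calc ‖R‖ ≤ A * ((2/c) * ((s + 1/c) * Real.exp (-c * s))) := hRbound
      _ = A * (2/c) * (s * Real.exp (-ε * s) + (1/c) * Real.exp (-ε * s))
            * Real.exp (-c' * s) := by rw [hEsplit]; ring
      _ ≤ A * (2/c) * (1/ε + 1/c) * Real.exp (-c' * s) := by
          apply mul_le_mul_of_nonneg_right _ (Real.exp_pos _).le
          apply mul_le_mul_of_nonneg_left _ (by positivity : (0:ℝ) ≤ A * (2/c))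
          have h1 : (1/c) * Real.exp (-ε * s) ≤ 1/c :=
            mul_le_of_le_one_right (by positivity) hEε1
          linarith
  calc ‖Δ₂ x * (Real.log x : ℂ) + R‖ ≤ ‖Δ₂ x * (Real.log x : ℂ)‖ + ‖R‖ := norm_add_le _ _
    _ ≤ A * (4/ε^2) * Real.exp (-c' * s) + A * (2/c) * (1/ε + 1/c) * Real.exp (-c' * s) := by
        linarith
    _ = (A * (4/ε^2) + A * (2/c) * (1/ε + 1/c)) * Real.exp (-c' * s) := by ring
end
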